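/- The partial fractal convolution operator P⁰₁ : L^p(I) → L^p(I), P⁰₁(b) = 0 *_T b (1 ≤ p ≤ ∞), satisfies ‖0 *_T b‖_p ≤ (Λ/(1−Λ))‖b‖_p for all b ∈ L^p(I). Moreover, if Λ < 1/2, then P⁰₁ is a contraction and its unique fixed point is the null function: if b ∈ L^p(I) satisfies 0 *_T b = b, then b = 0. -/

import Mathlib

open MeasureTheory ENNReal

set_option maxHeartbeats 1000000

noncomputable section

/-- The inverse of the increasing affine map `L n` sending `[x 0, x N]` onto
`[x n, x (n+1)]` (so `L n (x 0) = x n.castSucc` and `L n (x N) = x n.succ`). -/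
def Linv {N : ℕ} (x : Fin (N + 1) → ℝ) (n : Fin N) (y : ℝ) : ℝ :=
  x 0 + (y - x n.castSucc) * (x (Fin.last N) - x 0) / (x n.succ - x n.castSucc)

/-- The subinterval `I n` of the partition: `[x 0, x 1]` for `n = 0` and
`(x n, x (n+1)]` otherwise. -/
def subInt {N : ℕ} (x : Fin (N + 1) → ℝ) (n : Fin N) : Set ℝ :=
  if n.val = 0 then Set.Icc (x n.castSucc) (x n.succ)
  else Set.Ioc (x n.castSucc) (x n.succ)

/-- `h` is the image of `g` under the Read–Bajraktarević operator `T_{f,b}` with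
scale functions `α`, almost everywhere: on each `I n`,
`h = f + (α n ∘ Lₙ⁻¹) · ((g - b) ∘ Lₙ⁻¹)`. -/
def RBEq {N : ℕ} (μ : Measure ℝ) (x : Fin (N + 1) → ℝ) (α : Fin N → ℝ → ℝ)
    (f b g h : ℝ → ℝ) : Prop :=
  ∀ n : Fin N, ∀ᵐ t ∂μ, t ∈ subInt x n →
    h t = f t + α n (Linv x n t) * (g (Linv x n t) - b (Linv x n t))

/-- `h` satisfies the self-referential equation of `T_{f,b}`, i.e. `h` is a fixed
point of `T_{f,b}`; `h` is then the fractal convolution `f *_T b`. -/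
def SelfRef {N : ℕ} (μ : Measure ℝ) (x : Fin (N + 1) → ℝ) (α : Fin N → ℝ → ℝ)
    (f b h : ℝ → ℝ) : Prop :=
  RBEq μ x α f b h h

section Helpers

variable {N : ℕ} {x : Fin (N + 1) → ℝ}

lemma map_volume_affine {r : ℝ} (hr : r ≠ 0) (c : ℝ) :
    Measure.map (fun t => r * t + c) volume
      = ENNReal.ofReal |r⁻¹| • (volume : Measure ℝ) := by
  have : (fun t : ℝ => r * t + c) = (fun t : ℝ => t + c) ∘ (fun t : ℝ => r * t) := rfl
  rw [this, ← Measure.map_map (by fun_prop) (by fun_prop)]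
  rw [show (fun t : ℝ => r * t) = (r * ·) from rfl, Real.map_volume_mul_left hr,
    Measure.map_smul, map_add_right_eq_self volume c]

lemma volume_preimage_affine {r : ℝ} (hr : r ≠ 0) (c : ℝ) (S : Set ℝ) :
    volume ((fun t => r * t + c) ⁻¹' S) = ENNReal.ofReal |r⁻¹| * volume S := by
  have e : ℝ ≃ᵐ ℝ := (affineHomeomorph r c hr).toMeasurableEquiv
  calc volume ((fun t => r * t + c) ⁻¹' S)
      = Measure.map ((affineHomeomorph r c hr).toMeasurableEquiv) volume S :=
        ((affineHomeomorph r c hr).toMeasurableEquiv.map_apply S).symm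
    _ = ENNReal.ofReal |r⁻¹| * volume S := by
        rw [show ⇑(affineHomeomorph r c hr).toMeasurableEquiv = fun t => r * t + c from rfl,
          map_volume_affine hr c]; rfl

lemma dpos (hx : StrictMono x) (n : Fin N) : 0 < x n.succ - x n.castSucc :=
  sub_pos.2 (hx Fin.castSucc_lt_succ)

lemma Dpos (hx : StrictMono x) (hN : 0 < N) : 0 < x (Fin.last N) - x 0 :=
  sub_pos.2 (hx (by rw [Fin.lt_def]; simpa using hN))

/-- `Linv` written in affine form. -/
lemma Linv_eq_affine (hx : StrictMono x) (n : Fin N) :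
    Linv x n = fun t =>
      ((x (Fin.last N) - x 0) / (x n.succ - x n.castSucc)) * t
        + (x 0 - x n.castSucc * ((x (Fin.last N) - x 0) / (x n.succ - x n.castSucc))) := by
  funext t
  have hd := (dpos hx n).ne'
  unfold Linv
  field_simp
  ring

lemma subInt_subset_Icc (n : Fin N) :
    subInt x n ⊆ Set.Icc (x n.castSucc) (x n.succ) := by
  unfold subInt; split
  · exact subset_rfl
  · exact Set.Ioc_subset_Icc_self

lemma subInt_subset (hx : StrictMono x) (n : Fin N) :
    subInt x n ⊆ Set.Icc (x 0) (x (Fin.last N)) := by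
  refine (subInt_subset_Icc n).trans (Set.Icc_subset_Icc ?_ ?_)
  · exact hx.monotone (Fin.zero_le _)
  · exact hx.monotone (Fin.le_last _)

lemma measurableSet_subInt (n : Fin N) : MeasurableSet (subInt x n) := by
  unfold subInt; split
  · exact measurableSet_Icc
  · exact measurableSet_Ioc

lemma Linv_mem (hx : StrictMono x) (hN : 0 < N) {n : Fin N} {t : ℝ}
    (ht : t ∈ subInt x n) : Linv x n t ∈ Set.Icc (x 0) (x (Fin.last N)) := by
  obtain ⟨h1, h2⟩ := subInt_subset_Icc n ht
  have hd := dpos hx n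
  have hD := Dpos hx hN
  unfold Linv
  constructor
  · have : 0 ≤ (t - x n.castSucc) * (x (Fin.last N) - x 0) / (x n.succ - x n.castSucc) :=
      div_nonneg (mul_nonneg (sub_nonneg.2 h1) hD.le) hd.le
    linarith
  · have : (t - x n.castSucc) * (x (Fin.last N) - x 0) / (x n.succ - x n.castSucc)
        ≤ x (Fin.last N) - x 0 := by
      rw [div_le_iff₀ hd]; nlinarith
    linarith

lemma iUnion_subInt (hx : StrictMono x) (hN : 0 < N) :
    (⋃ n : Fin N, subInt x n) = Set.Icc (x 0) (x (Fin.last N)) := by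
  apply subset_antisymm
  · exact Set.iUnion_subset fun n => subInt_subset hx n
  · intro t ht
    obtain ⟨ht0, htN⟩ := ht
    by_cases h1 : t ≤ x (⟨0, hN⟩ : Fin N).succ
    · exact Set.mem_iUnion.2 ⟨⟨0, hN⟩, by
        simp only [subInt, if_pos rfl]
        exact ⟨by simpa using ht0, h1⟩⟩
    · -- take the largest k with x k < t
      push_neg at h1
      have hne : (Finset.univ.filter (fun k : Fin (N + 1) => x k < t)).Nonempty := by
        exact ⟨(⟨0, hN⟩ : Fin N).succ, Finset.mem_filter.2 ⟨Finset.mem_univ _, h1⟩⟩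
      set k := (Finset.univ.filter (fun k : Fin (N + 1) => x k < t)).max' hne with hk
      have hkmem : x k < t := by
        have := (Finset.univ.filter (fun k : Fin (N + 1) => x k < t)).max'_mem hne
        simpa using this
      have hklt : k < Fin.last N := by
        rcases lt_or_eq_of_le (Fin.le_last k) with h | h
        · exact h
        · exfalso; rw [h] at hkmem; exact absurd htN (not_le.2 hkmem)
      have hkN : k.val < N := by
        have := hklt; rw [Fin.lt_def] at this; simpa using this
      set n : Fin N := ⟨k.val, hkN⟩ with hn
      have hcast : n.castSucc = k := by
        apply Fin.ext; simp [hn]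
      have hsucc : t ≤ x n.succ := by
        by_contra hcon
        push_neg at hcon
        have hmem : n.succ ∈ Finset.univ.filter (fun k : Fin (N + 1) => x k < t) :=
          Finset.mem_filter.2 ⟨Finset.mem_univ _, hcon⟩
        have hle := Finset.le_max' _ _ hmem
        rw [← hk] at hle
        have : k < n.succ := by
          rw [Fin.lt_def, Fin.val_succ]; exact Nat.lt_succ_self _
        exact absurd hle (not_le.2 this)
      refine Set.mem_iUnion.2 ⟨n, ?_⟩
      have hIoc : t ∈ Set.Ioc (x n.castSucc) (x n.succ) := ⟨by rw [hcast]; exact hkmem, hsucc⟩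
      unfold subInt
      split
      · exact Set.Ioc_subset_Icc_self hIoc
      · exact hIoc

lemma subInt_disjoint (hx : StrictMono x) :
    Pairwise (Function.onFun Disjoint (subInt x)) := by
  have key : ∀ m n : Fin N, m < n → Disjoint (subInt x m) (subInt x n) := by
    intro m n hmn
    rw [Set.disjoint_left]
    intro t htm htn
    have h1 : t ≤ x m.succ := (subInt_subset_Icc m htm).2
    have h2 : x n.castSucc < t := by
      have hn0 : n.val ≠ 0 := by
        have := hmn; rw [Fin.lt_def] at this; omega
      rw [subInt, if_neg hn0] at htn
      exact htn.1
    have hle : x m.succ ≤ x n.castSucc := by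
      apply hx.monotone
      rw [Fin.le_def, Fin.val_succ, Fin.coe_castSucc]
      exact hmn
    linarith
  intro m n hmn
  rcases lt_or_gt_of_ne hmn with h | h
  · exact key m n h
  · exact (key n m h).symm

lemma sum_lengths (hx : StrictMono x) :
    ∑ n : Fin N, (x n.succ - x n.castSucc) = x (Fin.last N) - x 0 := by
  classical
  set f : ℕ → ℝ := fun i => x ⟨min i N, by omega⟩ with hf
  have h1 : ∀ n : Fin N, x n.succ - x n.castSucc = f (n.val + 1) - f n.val := by
    intro n
    have e1 : (⟨min (n.val + 1) N, by omega⟩ : Fin (N + 1)) = n.succ := by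
      apply Fin.ext; simp [Nat.min_eq_left (Nat.succ_le_of_lt n.isLt)]
    have e2 : (⟨min n.val N, by omega⟩ : Fin (N + 1)) = n.castSucc := by
      apply Fin.ext; simp [Nat.min_eq_left n.isLt.le]
    rw [hf]; simp only [e1, e2]
  calc ∑ n : Fin N, (x n.succ - x n.castSucc)
      = ∑ n : Fin N, (f (n.val + 1) - f n.val) := by
        exact Finset.sum_congr rfl fun n _ => h1 n
    _ = ∑ i ∈ Finset.range N, (f (i + 1) - f i) :=
        Fin.sum_univ_eq_sum_range (fun i => f (i + 1) - f i) N
    _ = f N - f 0 := Finset.sum_range_sub f N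
    _ = x (Fin.last N) - x 0 := by
        rw [hf]; congr 1 <;> apply congrArg <;> apply Fin.ext <;> simp [Fin.last]

lemma Linv_preimage_null (hx : StrictMono x) (hN : 0 < N) (n : Fin N) {S : Set ℝ}
    (hS : volume S = 0) : volume (Linv x n ⁻¹' S) = 0 := by
  have hd := dpos hx n
  have hD := Dpos hx hN
  have hr : (x (Fin.last N) - x 0) / (x n.succ - x n.castSucc) ≠ 0 :=
    ne_of_gt (div_pos hD hd)
  rw [Linv_eq_affine hx n, volume_preimage_affine hr, hS, mul_zero]

/-- transfer an a.e. property on `μ = volume.restrict I` through `Linv`. -/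
lemma ae_transfer (hx : StrictMono x) (hN : 0 < N) (n : Fin N) {P : ℝ → Prop}
    (hP : ∀ᵐ u ∂(volume.restrict (Set.Icc (x 0) (x (Fin.last N)))), P u) :
    ∀ᵐ t ∂(volume.restrict (subInt x n)), P (Linv x n t) := by
  rw [ae_restrict_iff' (measurableSet_subInt n)]
  rw [ae_restrict_iff'₀ measurableSet_Icc.nullMeasurableSet] at hP
  rw [ae_iff] at hP ⊢
  obtain ⟨B, hBsub, hBmeas, hBnull⟩ := exists_measurable_superset_of_null hP
  refine measure_mono_null (fun t ht => ?_) (Linv_preimage_null hx hN n hBnull)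
  simp only [Set.mem_setOf_eq, not_forall] at ht
  obtain ⟨htmem, htP⟩ := ht
  apply hBsub
  simp only [Set.mem_setOf_eq, not_forall]
  exact ⟨Linv_mem hx hN htmem, htP⟩

/-- Change of variables estimate. -/
lemma lintegral_comp_Linv_le (hx : StrictMono x) (hN : 0 < N) (n : Fin N) (F : ℝ → ℝ≥0∞) :
    ∫⁻ t in subInt x n, F (Linv x n t) ∂volume
      ≤ ENNReal.ofReal ((x n.succ - x n.castSucc) / (x (Fin.last N) - x 0))
        * ∫⁻ u in Set.Icc (x 0) (x (Fin.last N)), F u ∂volume := by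
  have hd := dpos hx n
  have hD := Dpos hx hN
  set r : ℝ := (x (Fin.last N) - x 0) / (x n.succ - x n.castSucc) with hrdef
  have hrpos : 0 < r := div_pos hD hd
  set c : ℝ := x 0 - x n.castSucc * r with hcdef
  set e : ℝ ≃ᵐ ℝ := (affineHomeomorph r c hrpos.ne').toMeasurableEquiv with hedef
  have heLinv : ∀ t, e t = Linv x n t := by
    intro t; rw [Linv_eq_affine hx n]; rfl
  have hinv : |r⁻¹| = (x n.succ - x n.castSucc) / (x (Fin.last N) - x 0) := by
    rw [abs_of_pos (inv_pos.2 hrpos), hrdef, inv_div]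
  calc ∫⁻ t in subInt x n, F (Linv x n t) ∂volume
      = ∫⁻ t in subInt x n, F (e t) ∂volume := by
        refine lintegral_congr fun t => by rw [heLinv]
    _ = ∫⁻ u, F u ∂(Measure.map e (volume.restrict (subInt x n))) :=
        (lintegral_map_equiv F e).symm
    _ ≤ ∫⁻ u, F u ∂(ENNReal.ofReal ((x n.succ - x n.castSucc) / (x (Fin.last N) - x 0))
          • volume.restrict (Set.Icc (x 0) (x (Fin.last N)))) := by
        refine lintegral_mono' ?_ le_rfl
        refine Measure.le_iff.2 fun A hA => ?_
        rw [e.map_apply A, Measure.restrict_apply' (measurableSet_subInt n),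
          Measure.smul_apply, Measure.restrict_apply' measurableSet_Icc, smul_eq_mul]
        have hsub : e ⁻¹' A ∩ subInt x n ⊆ (fun t => r * t + c) ⁻¹' (A ∩ Set.Icc (x 0) (x (Fin.last N))) := by
          intro t ⟨ht1, ht2⟩
          refine ⟨ht1, ?_⟩
          have := Linv_mem hx hN ht2
          rwa [← heLinv] at this
        calc volume (e ⁻¹' A ∩ subInt x n)
            ≤ volume ((fun t => r * t + c) ⁻¹' (A ∩ Set.Icc (x 0) (x (Fin.last N)))) :=
              measure_mono hsub
          _ = ENNReal.ofReal ((x n.succ - x n.castSucc) / (x (Fin.last N) - x 0))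
                * volume (A ∩ Set.Icc (x 0) (x (Fin.last N))) := by
              rw [volume_preimage_affine hrpos.ne', hinv]
    _ = ENNReal.ofReal ((x n.succ - x n.castSucc) / (x (Fin.last N) - x 0))
        * ∫⁻ u in Set.Icc (x 0) (x (Fin.last N)), F u ∂volume := by
        rw [lintegral_smul_measure, smul_eq_mul]

/-- The key estimate: a function satisfying the 0-seed self-referential inequality
has `eLpNorm` bounded by `Λ` times that of the transformed function. -/
lemma key_bound (hx : StrictMono x) (hN : 0 < N) (p : ℝ≥0∞) (hp : 1 ≤ p)
    (Λ : ℝ) (hΛ0 : 0 ≤ Λ) (α : Fin N → ℝ → ℝ)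
    (hα : ∀ n, ∀ᵐ u ∂(volume.restrict (Set.Icc (x 0) (x (Fin.last N)))), |α n u| ≤ Λ)
    (h g : ℝ → ℝ)
    (hrec : ∀ n : Fin N, ∀ᵐ t ∂(volume.restrict (Set.Icc (x 0) (x (Fin.last N)))),
      t ∈ subInt x n → h t = α n (Linv x n t) * g (Linv x n t)) :
    eLpNorm h p (volume.restrict (Set.Icc (x 0) (x (Fin.last N))))
      ≤ ENNReal.ofReal Λ * eLpNorm g p (volume.restrict (Set.Icc (x 0) (x (Fin.last N)))) := by
  set μ : Measure ℝ := volume.restrict (Set.Icc (x 0) (x (Fin.last N))) with hμdef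
  have hbound : ∀ n : Fin N, ∀ᵐ t ∂(volume.restrict (subInt x n)),
      (‖h t‖₊ : ℝ≥0∞) ≤ ENNReal.ofReal Λ * (‖g (Linv x n t)‖₊ : ℝ≥0∞) := by
    intro n
    have h1 : ∀ᵐ t ∂(volume.restrict (subInt x n)),
        t ∈ subInt x n → h t = α n (Linv x n t) * g (Linv x n t) :=
      ae_mono (Measure.restrict_mono (subInt_subset hx n) le_rfl) (hrec n)
    have h2 := ae_restrict_mem (μ := volume) (measurableSet_subInt (x := x) n)
    have h3 := ae_transfer hx hN n (hα n)
    filter_upwards [h1, h2, h3] with t ht1 ht2 ht3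
    rw [ht1 ht2, ← enorm_eq_nnnorm, ← enorm_eq_nnnorm, Real.enorm_eq_ofReal_abs, abs_mul,
      ENNReal.ofReal_mul (abs_nonneg _), Real.enorm_eq_ofReal_abs]
    exact mul_le_mul_left (ENNReal.ofReal_le_ofReal ht3) _
  rcases eq_or_ne p ∞ with hptop | hptop
  · -- p = ∞
    subst hptop
    rw [eLpNorm_exponent_top, eLpNorm_exponent_top, eLpNormEssSup]
    set C := ENNReal.ofReal Λ * eLpNormEssSup g μ with hC
    refine essSup_le_of_ae_le C ?_
    rw [Filter.EventuallyLE, hμdef, ← iUnion_subInt hx hN, ae_restrict_iUnion_iff]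
    intro n
    have h4 : ∀ᵐ t ∂(volume.restrict (subInt x n)),
        (‖g (Linv x n t)‖₊ : ℝ≥0∞) ≤ eLpNormEssSup g μ := by
      exact ae_transfer hx hN n
        (P := fun u => (‖g u‖₊ : ℝ≥0∞) ≤ eLpNormEssSup g μ)
        (enorm_ae_le_eLpNormEssSup g μ)
    filter_upwards [hbound n, h4] with t ht1 ht2
    exact ht1.trans (mul_le_mul_right ht2 _)
  · -- p < ∞
    have hp0 : p ≠ 0 := by intro h0; rw [h0] at hp; simp at hp
    have hq0 : 0 < p.toReal := ENNReal.toReal_pos hp0 hptop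
    set q : ℝ := p.toReal with hqdef
    rw [eLpNorm_eq_lintegral_rpow_enorm hp0 hptop, eLpNorm_eq_lintegral_rpow_enorm hp0 hptop]
    simp only [enorm_eq_nnnorm]
    have main : (∫⁻ t, (‖h t‖₊ : ℝ≥0∞) ^ q ∂μ)
        ≤ (ENNReal.ofReal Λ) ^ q * ∫⁻ u, (‖g u‖₊ : ℝ≥0∞) ^ q ∂μ := by
      have hsplit : (∫⁻ t, (‖h t‖₊ : ℝ≥0∞) ^ q ∂μ)
          = ∑ n : Fin N, ∫⁻ t in subInt x n, (‖h t‖₊ : ℝ≥0∞) ^ q ∂volume := by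
        rw [hμdef, ← iUnion_subInt hx hN,
          lintegral_iUnion (fun n => measurableSet_subInt n) (subInt_disjoint hx), tsum_fintype]
      rw [hsplit]
      have hterm : ∀ n : Fin N, (∫⁻ t in subInt x n, (‖h t‖₊ : ℝ≥0∞) ^ q ∂volume)
          ≤ (ENNReal.ofReal Λ) ^ q
            * ENNReal.ofReal ((x n.succ - x n.castSucc) / (x (Fin.last N) - x 0))
            * ∫⁻ u, (‖g u‖₊ : ℝ≥0∞) ^ q ∂μ := by
        intro n
        calc (∫⁻ t in subInt x n, (‖h t‖₊ : ℝ≥0∞) ^ q ∂volume)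
            ≤ ∫⁻ t in subInt x n,
                (ENNReal.ofReal Λ) ^ q * (‖g (Linv x n t)‖₊ : ℝ≥0∞) ^ q ∂volume := by
              refine lintegral_mono_ae ?_
              filter_upwards [hbound n] with t ht
              rw [← ENNReal.mul_rpow_of_nonneg _ _ hq0.le]
              exact ENNReal.rpow_le_rpow ht hq0.le
          _ = (ENNReal.ofReal Λ) ^ q
                * ∫⁻ t in subInt x n, (‖g (Linv x n t)‖₊ : ℝ≥0∞) ^ q ∂volume :=
              lintegral_const_mul' _ _ (ENNReal.rpow_ne_top_of_nonneg hq0.le ENNReal.ofReal_ne_top)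
          _ ≤ (ENNReal.ofReal Λ) ^ q
                * (ENNReal.ofReal ((x n.succ - x n.castSucc) / (x (Fin.last N) - x 0))
                  * ∫⁻ u in Set.Icc (x 0) (x (Fin.last N)), (‖g u‖₊ : ℝ≥0∞) ^ q ∂volume) :=
              mul_le_mul_right (lintegral_comp_Linv_le hx hN n
                (fun u => (‖g u‖₊ : ℝ≥0∞) ^ q)) _
          _ = (ENNReal.ofReal Λ) ^ q
                * ENNReal.ofReal ((x n.succ - x n.castSucc) / (x (Fin.last N) - x 0))
                * ∫⁻ u, (‖g u‖₊ : ℝ≥0∞) ^ q ∂μ := by rw [hμdef, mul_assoc]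
      calc (∑ n : Fin N, ∫⁻ t in subInt x n, (‖h t‖₊ : ℝ≥0∞) ^ q ∂volume)
          ≤ ∑ n : Fin N, (ENNReal.ofReal Λ) ^ q
              * ENNReal.ofReal ((x n.succ - x n.castSucc) / (x (Fin.last N) - x 0))
              * ∫⁻ u, (‖g u‖₊ : ℝ≥0∞) ^ q ∂μ := Finset.sum_le_sum fun n _ => hterm n
        _ = (ENNReal.ofReal Λ) ^ q * (∫⁻ u, (‖g u‖₊ : ℝ≥0∞) ^ q ∂μ)
              * ∑ n : Fin N, ENNReal.ofReal ((x n.succ - x n.castSucc) / (x (Fin.last N) - x 0)) := by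
            rw [Finset.mul_sum]; exact Finset.sum_congr rfl fun n _ => by ring
        _ = (ENNReal.ofReal Λ) ^ q * ∫⁻ u, (‖g u‖₊ : ℝ≥0∞) ^ q ∂μ := by
            have hD := Dpos hx hN
            have hsum : ∑ n : Fin N,
                ENNReal.ofReal ((x n.succ - x n.castSucc) / (x (Fin.last N) - x 0)) = 1 := by
              rw [← ENNReal.ofReal_sum_of_nonneg (fun n _ =>
                div_nonneg (dpos hx n).le hD.le)]
              rw [← Finset.sum_div, sum_lengths hx, div_self hD.ne', ENNReal.ofReal_one]
            rw [hsum, mul_one]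
    calc (∫⁻ t, (‖h t‖₊ : ℝ≥0∞) ^ q ∂μ) ^ (1 / q)
        ≤ ((ENNReal.ofReal Λ) ^ q * ∫⁻ u, (‖g u‖₊ : ℝ≥0∞) ^ q ∂μ) ^ (1 / q) :=
          ENNReal.rpow_le_rpow main (by positivity)
      _ = ENNReal.ofReal Λ * (∫⁻ u, (‖g u‖₊ : ℝ≥0∞) ^ q ∂μ) ^ (1 / q) := by
          rw [ENNReal.mul_rpow_of_nonneg _ _ (by positivity : (0:ℝ) ≤ 1 / q),
            ← ENNReal.rpow_mul, mul_one_div, div_self hq0.ne', ENNReal.rpow_one]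

end Helpers

/-- The operator `P⁰₁ b = 0 *_T b` satisfies
`‖0 *_T b‖_p ≤ (Λ/(1−Λ))‖b‖_p`; moreover, if `Λ < 1/2` then `P⁰₁` is a contraction
and its unique fixed point is the null function. -/
theorem partial_convolution_null_seed_bound_and_fixed_point
    (N : ℕ) (hN : 2 ≤ N) (x : Fin (N + 1) → ℝ) (hx : StrictMono x)
    (μ : Measure ℝ) (hμ : μ = volume.restrict (Set.Icc (x 0) (x (Fin.last N))))
    (p : ℝ≥0∞) [Fact (1 ≤ p)]
    (α : Fin N → Lp ℝ ∞ μ)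
    (Λ : ℝ) (hΛdef : Λ = ⨆ n : Fin N, ‖α n‖) (hΛ : Λ < 1)
    (P₁ : Lp ℝ p μ → Lp ℝ p μ)
    (hP₁ : ∀ b : Lp ℝ p μ, SelfRef μ x (fun n => ⇑(α n)) ⇑(0 : Lp ℝ p μ) ⇑b ⇑(P₁ b)) :
    (∀ b : Lp ℝ p μ, ‖P₁ b‖ ≤ Λ / (1 - Λ) * ‖b‖) ∧
    (Λ < 1 / 2 →
      Λ / (1 - Λ) < 1 ∧
      (∀ b b' : Lp ℝ p μ, ‖P₁ b - P₁ b'‖ ≤ Λ / (1 - Λ) * ‖b - b'‖) ∧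
      (∀ b : Lp ℝ p μ, P₁ b = b → b = 0)) := by
  have hN0 : 0 < N := by omega
  have hΛ0 : 0 ≤ Λ := hΛdef ▸ Real.iSup_nonneg fun n => norm_nonneg _
  have h1Λ : 0 < 1 - Λ := by linarith
  have hΛle : ∀ n, ‖α n‖ ≤ Λ := by
    intro n; rw [hΛdef]
    exact le_ciSup (f := fun n : Fin N => ‖α n‖) (Set.Finite.bddAbove (Set.finite_range _)) n
  obtain ⟨β, hβ⟩ : ∃ β : Fin N → ℝ → ℝ, ∀ n, β n = ⇑(α n) :=
    ⟨fun n => ⇑(α n), fun _ => rfl⟩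
  have hα : ∀ n, ∀ᵐ u ∂μ, |β n u| ≤ Λ := by
    intro n
    rw [hβ n]
    filter_upwards [enorm_ae_le_eLpNormEssSup (⇑(α n)) μ] with u hu
    have hne : eLpNormEssSup (⇑(α n)) μ ≠ ∞ := by
      rw [← eLpNorm_exponent_top]; exact Lp.eLpNorm_ne_top (α n)
    have := ENNReal.toReal_mono hne hu
    rw [enorm_eq_nnnorm, ENNReal.coe_toReal, coe_nnnorm] at this
    calc |(α n : ℝ → ℝ) u| = ‖(α n : ℝ → ℝ) u‖ := (Real.norm_eq_abs _).symm
      _ ≤ (eLpNormEssSup (⇑(α n)) μ).toReal := this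
      _ = ‖α n‖ := by rw [Lp.norm_def, eLpNorm_exponent_top]
      _ ≤ Λ := hΛle n
  have KEY : ∀ (h g : ℝ → ℝ),
      (∀ n : Fin N, ∀ᵐ t ∂μ,
        t ∈ subInt x n → h t = β n (Linv x n t) * g (Linv x n t)) →
      eLpNorm h p μ ≤ ENNReal.ofReal Λ * eLpNorm g p μ := by
    intro h g hrec
    rw [hμ] at hrec hα ⊢
    exact key_bound hx hN0 p Fact.out Λ hΛ0 _ hα h g hrec
  -- generic norm estimate from the ENNReal inequality
  have NORM : ∀ (u v : Lp ℝ p μ) (g : ℝ → ℝ), g =ᵐ[μ] ⇑v →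
      eLpNorm (⇑u) p μ ≤ ENNReal.ofReal Λ * eLpNorm g p μ → ‖u‖ ≤ Λ * ‖v‖ := by
    intro u v g hg hle
    rw [eLpNorm_congr_ae hg] at hle
    rw [Lp.norm_def, Lp.norm_def]
    calc (eLpNorm (⇑u) p μ).toReal
        ≤ (ENNReal.ofReal Λ * eLpNorm (⇑v) p μ).toReal :=
          ENNReal.toReal_mono
            (ENNReal.mul_ne_top ENNReal.ofReal_ne_top (Lp.eLpNorm_ne_top v)) hle
      _ = Λ * (eLpNorm (⇑v) p μ).toReal := by
          rw [ENNReal.toReal_mul, ENNReal.toReal_ofReal hΛ0]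
  have bound1 : ∀ b : Lp ℝ p μ, ‖P₁ b‖ ≤ Λ / (1 - Λ) * ‖b‖ := by
    intro b
    have hrec : ∀ n : Fin N, ∀ᵐ t ∂μ, t ∈ subInt x n →
        (P₁ b : ℝ → ℝ) t = β n (Linv x n t)
          * ((P₁ b : ℝ → ℝ) (Linv x n t) - (b : ℝ → ℝ) (Linv x n t)) := by
      intro n
      rw [hβ n]
      filter_upwards [hP₁ b n, Lp.coeFn_zero ℝ p μ] with t h1 h2
      intro ht
      rw [h1 ht, h2]
      simp
    have hkey : eLpNorm (⇑(P₁ b)) p μ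
        ≤ ENNReal.ofReal Λ
          * eLpNorm (fun u => (P₁ b : ℝ → ℝ) u - (b : ℝ → ℝ) u) p μ :=
      KEY (⇑(P₁ b)) (fun u => (P₁ b : ℝ → ℝ) u - (b : ℝ → ℝ) u) hrec
    have hg : (fun u => (P₁ b : ℝ → ℝ) u - (b : ℝ → ℝ) u) =ᵐ[μ] ⇑(P₁ b - b) := by
      filter_upwards [Lp.coeFn_sub (P₁ b) b] with u hu
      rw [hu]; rfl
    have h1 : ‖P₁ b‖ ≤ Λ * ‖P₁ b - b‖ := NORM (P₁ b) (P₁ b - b) _ hg hkey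
    have h2 : ‖P₁ b - b‖ ≤ ‖P₁ b‖ + ‖b‖ := norm_sub_le _ _
    rw [div_mul_eq_mul_div, le_div_iff₀ h1Λ]
    nlinarith [mul_le_mul_of_nonneg_left h2 hΛ0]
  refine ⟨bound1, fun hΛhalf => ?_⟩
  have hratio : Λ / (1 - Λ) < 1 := by
    rw [div_lt_one h1Λ]; linarith
  refine ⟨hratio, ?_, ?_⟩
  · intro b b'
    have hrec : ∀ n : Fin N, ∀ᵐ t ∂μ, t ∈ subInt x n →
        ((P₁ b : ℝ → ℝ) t - (P₁ b' : ℝ → ℝ) t)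
          = β n (Linv x n t)
            * (((P₁ b : ℝ → ℝ) (Linv x n t) - (P₁ b' : ℝ → ℝ) (Linv x n t))
                - ((b : ℝ → ℝ) (Linv x n t) - (b' : ℝ → ℝ) (Linv x n t))) := by
      intro n
      rw [hβ n]
      filter_upwards [hP₁ b n, hP₁ b' n, Lp.coeFn_zero ℝ p μ] with t h1 h2 h3
      intro ht
      rw [h1 ht, h2 ht, h3]
      simp only [Pi.zero_apply]
      ring
    have hH : (fun t => (P₁ b : ℝ → ℝ) t - (P₁ b' : ℝ → ℝ) t) =ᵐ[μ] ⇑(P₁ b - P₁ b') := by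
      filter_upwards [Lp.coeFn_sub (P₁ b) (P₁ b')] with u hu
      rw [hu]; rfl
    have hkey : eLpNorm (fun t => (P₁ b : ℝ → ℝ) t - (P₁ b' : ℝ → ℝ) t) p μ
        ≤ ENNReal.ofReal Λ
          * eLpNorm (fun u => ((P₁ b : ℝ → ℝ) u - (P₁ b' : ℝ → ℝ) u)
              - ((b : ℝ → ℝ) u - (b' : ℝ → ℝ) u)) p μ :=
      KEY _ (fun u => ((P₁ b : ℝ → ℝ) u - (P₁ b' : ℝ → ℝ) u)
              - ((b : ℝ → ℝ) u - (b' : ℝ → ℝ) u)) hrec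
    rw [eLpNorm_congr_ae hH] at hkey
    have hG : (fun u => ((P₁ b : ℝ → ℝ) u - (P₁ b' : ℝ → ℝ) u)
        - ((b : ℝ → ℝ) u - (b' : ℝ → ℝ) u)) =ᵐ[μ] ⇑(P₁ b - P₁ b' - (b - b')) := by
      filter_upwards [Lp.coeFn_sub (P₁ b - P₁ b') (b - b'), Lp.coeFn_sub (P₁ b) (P₁ b'),
        Lp.coeFn_sub b b'] with u h1 h2 h3
      rw [h1, Pi.sub_apply, h2, h3, Pi.sub_apply, Pi.sub_apply]
    have h1 : ‖P₁ b - P₁ b'‖ ≤ Λ * ‖P₁ b - P₁ b' - (b - b')‖ :=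
      NORM (P₁ b - P₁ b') (P₁ b - P₁ b' - (b - b')) _ hG hkey
    have h2 : ‖P₁ b - P₁ b' - (b - b')‖ ≤ ‖P₁ b - P₁ b'‖ + ‖b - b'‖ :=
      norm_sub_le _ _
    rw [div_mul_eq_mul_div, le_div_iff₀ h1Λ]
    nlinarith [mul_le_mul_of_nonneg_left h2 hΛ0]
  · intro b hb
    have := bound1 b
    rw [hb] at this
    have hb0 : ‖b‖ = 0 := by nlinarith [norm_nonneg b]
    exact norm_eq_zero.mp hb0

end
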